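/- Let A be an n×n real Hurwitz matrix and Q a symmetric positive semidefinite n×n real matrix. Suppose X is a symmetric n×n real matrix such that A·X + X·Aᵀ + Q is negative definite, and P is the (unique) solution of the Lyapunov equation A·P + P·Aᵀ + Q = 0. Then X − P is positive definite. -/

import Mathlib

open Matrix
open scoped Matrix

/-- A symmetric real matrix is negative definite if `xᵀ M x < 0` for all nonzero `x`. -/
def Matrix.NegDef {m : Type*} [Fintype m] (M : Matrix m m ℝ) : Prop :=
  M.IsSymm ∧ ∀ x : m → ℝ, x ≠ 0 → x ⬝ᵥ (M *ᵥ x) < 0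

/-- A real square matrix is Hurwitz if every eigenvalue of it, viewed as a complex
matrix, has strictly negative real part. -/
def IsHurwitz {n : ℕ} (A : Matrix (Fin n) (Fin n) ℝ) : Prop :=
  ∀ μ ∈ spectrum ℂ (A.map (Complex.ofReal : ℝ → ℂ)), μ.re < 0

section LyapAux

open Filter Topology NormedSpace

attribute [local instance] Matrix.linftyOpNormedAddCommGroup Matrix.linftyOpNormedRing
  Matrix.linftyOpNormedAlgebra

variable {n : ℕ}

/-- `mulVec` by a fixed vector, as a continuous linear map in the matrix argument. -/
noncomputable def LyapAux.mulVecCLM (𝕜 : Type*) [RCLike 𝕜] (n : ℕ) (w : Fin n → 𝕜) :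
    Matrix (Fin n) (Fin n) 𝕜 →L[𝕜] (Fin n → 𝕜) :=
  LinearMap.toContinuousLinearMap
    { toFun := fun B => B *ᵥ w
      map_add' := fun B C => Matrix.add_mulVec B C w
      map_smul' := fun c B => Matrix.smul_mulVec c B w }

@[simp] lemma LyapAux.mulVecCLM_apply {𝕜 : Type*} [RCLike 𝕜] {n : ℕ} (w : Fin n → 𝕜)
    (B : Matrix (Fin n) (Fin n) 𝕜) : LyapAux.mulVecCLM 𝕜 n w B = B *ᵥ w := rfl

/-- Pointwise decay of `exp(tM)` for a complex matrix whose spectrum lies in the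
open left half plane. -/
lemma LyapAux.tendsto_exp_mulVec_complex (M : Matrix (Fin n) (Fin n) ℂ)
    (h : ∀ μ ∈ spectrum ℂ M, μ.re < 0) (w : Fin n → ℂ) :
    Tendsto (fun t : ℝ => exp ((t : ℂ) • M) *ᵥ w) atTop (𝓝 0) := by
  have hsup : w ∈ ⨆ μ : ℂ,
      Module.End.maxGenEigenspace (Matrix.toLinAlgEquiv' M) μ := by
    rw [Module.End.iSup_maxGenEigenspace_eq_top]; trivial
  refine Submodule.iSup_induction
      (motive := fun w => Tendsto (fun t : ℝ => exp ((t : ℂ) • M) *ᵥ w) atTop (𝓝 0))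
      _ hsup (fun μ w hw => ?_) ?_ (fun a b ha hb => ?_)
  ·
    by_cases hw0 : w = 0
    · simpa [hw0] using (tendsto_const_nhds : Tendsto (fun _ : ℝ => (0 : Fin n → ℂ)) atTop _)
    obtain ⟨k, hk⟩ := (Module.End.mem_maxGenEigenspace _ _ _).mp hw
    set N : Matrix (Fin n) (Fin n) ℂ := M - μ • 1 with hNdef
    have hNk : (N ^ k) *ᵥ w = 0 := by
      have he : Matrix.toLinAlgEquiv' M - μ • 1 = Matrix.toLinAlgEquiv' N := by
        simp only [hNdef, map_sub, _root_.map_smul, _root_.map_one]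
      have hpow : (Matrix.toLinAlgEquiv' N) ^ k = Matrix.toLinAlgEquiv' (N ^ k) :=
        (_root_.map_pow (Matrix.toLinAlgEquiv' :
          Matrix (Fin n) (Fin n) ℂ ≃ₐ[ℂ] Module.End ℂ (Fin n → ℂ)) N k).symm
      rw [he, hpow] at hk
      rwa [Matrix.toLinAlgEquiv'_apply] at hk
    have hk0 : k ≠ 0 := by
      rintro rfl
      simp only [pow_zero, Matrix.one_mulVec] at hNk
      exact hw0 hNk
    have hdetN : N.det = 0 := by
      have h1 : (N ^ k).det = 0 := by
        rw [← Matrix.exists_mulVec_eq_zero_iff]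
        exact ⟨w, hw0, hNk⟩
      rw [Matrix.det_pow] at h1
      exact pow_eq_zero_iff hk0 |>.mp h1
    have hμmem : μ ∈ spectrum ℂ M := by
      rw [spectrum.mem_iff]
      intro hu
      rw [Matrix.isUnit_iff_isUnit_det] at hu
      have heq : algebraMap ℂ (Matrix (Fin n) (Fin n) ℂ) μ - M = -N := by
        rw [hNdef, Algebra.algebraMap_eq_smul_one, neg_sub]
      rw [heq, Matrix.det_neg, hdetN, mul_zero] at hu
      exact hu.ne_zero rfl
    have hre : μ.re < 0 := h μ hμmem
    -- the explicit formula
    have key : ∀ t : ℝ, exp ((t : ℂ) • M) *ᵥ w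
        = Complex.exp (t * μ) •
          ∑ j ∈ Finset.range k, (((t : ℂ) ^ j) * ((j.factorial : ℂ))⁻¹) • (N ^ j *ᵥ w) := by
      intro t
      have hsplit : (t : ℂ) • M = ((t : ℂ) * μ) • (1 : Matrix (Fin n) (Fin n) ℂ) + (t : ℂ) • N := by
        rw [hNdef]; rw [smul_sub, smul_smul]; abel
      have hcomm : Commute (((t : ℂ) * μ) • (1 : Matrix (Fin n) (Fin n) ℂ)) ((t : ℂ) • N) :=
        ((Commute.one_left N).smul_left _).smul_right _
      rw [hsplit, Matrix.exp_add_of_commute _ _ hcomm]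
      have h1 : exp (((t : ℂ) * μ) • (1 : Matrix (Fin n) (Fin n) ℂ))
          = Complex.exp (t * μ) • (1 : Matrix (Fin n) (Fin n) ℂ) := by
        rw [← Algebra.algebraMap_eq_smul_one]
        erw [← algebraMap_exp_comm]
        rw [← Complex.exp_eq_exp_ℂ, Algebra.algebraMap_eq_smul_one]
      rw [h1, smul_mul_assoc, one_mul, Matrix.smul_mulVec]
      congr 1
      -- truncate the series
      have hsum := LyapAux.mulVecCLM ℂ n w |>.map_tsum
        (expSeries_summable' (𝕂 := ℂ) ((t : ℂ) • N))
      rw [exp_eq_tsum ℂ]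
      rw [show (∑' j : ℕ, ((j.factorial : ℂ))⁻¹ • ((t : ℂ) • N) ^ j) *ᵥ w
            = LyapAux.mulVecCLM ℂ n w (∑' j : ℕ, ((j.factorial : ℂ))⁻¹ • ((t : ℂ) • N) ^ j) from rfl,
        hsum]
      have hvanish : ∀ j ∉ Finset.range k,
          LyapAux.mulVecCLM ℂ n w (((j.factorial : ℂ))⁻¹ • ((t : ℂ) • N) ^ j) = 0 := by
        intro j hj
        rw [Finset.mem_range, not_lt] at hj
        have : (N ^ j) *ᵥ w = 0 := by
          have : N ^ j = N ^ (j - k) * N ^ k := by rw [← pow_add]; congr 1; omega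
          rw [this, ← Matrix.mulVec_mulVec, hNk, Matrix.mulVec_zero]
        simp [smul_pow, Matrix.smul_mulVec, this]
      rw [tsum_eq_sum hvanish]
      refine Finset.sum_congr rfl fun j hj => ?_
      simp only [LyapAux.mulVecCLM_apply, smul_pow, Matrix.smul_mulVec]
      rw [smul_smul, mul_comm]
    -- the bound
    rw [show (fun t : ℝ => exp ((t : ℂ) • M) *ᵥ w) = fun t : ℝ =>
        Complex.exp ((t : ℂ) * μ) •
          ∑ j ∈ Finset.range k, (((t : ℂ) ^ j) * ((j.factorial : ℂ))⁻¹) • (N ^ j *ᵥ w)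
      from funext key]
    apply squeeze_zero_norm'
      (a := fun t => ∑ j ∈ Finset.range k,
        ‖N ^ j *ᵥ w‖ * ((j.factorial : ℝ))⁻¹ * (t ^ j * Real.exp (μ.re * t)))
    · filter_upwards [eventually_ge_atTop (0 : ℝ)] with t ht
      rw [norm_smul]
      have habs : ‖Complex.exp (↑t * μ)‖ = Real.exp (t * μ.re) := by
        rw [Complex.norm_exp]
        congr 1
        simp [Complex.mul_re]
      rw [habs]
      calc Real.exp (t * μ.re) * ‖∑ j ∈ Finset.range k,
              (((t : ℂ) ^ j) * ((j.factorial : ℂ))⁻¹) • (N ^ j *ᵥ w)‖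
          ≤ Real.exp (t * μ.re) * ∑ j ∈ Finset.range k,
              ‖(((t : ℂ) ^ j) * ((j.factorial : ℂ))⁻¹) • (N ^ j *ᵥ w)‖ := by
            gcongr
            exact norm_sum_le _ _
        _ = ∑ j ∈ Finset.range k,
              ‖N ^ j *ᵥ w‖ * ((j.factorial : ℝ))⁻¹ * (t ^ j * Real.exp (μ.re * t)) := by
            rw [Finset.mul_sum]
            refine Finset.sum_congr rfl fun j hj => ?_
            rw [norm_smul, norm_mul, norm_inv, norm_pow]
            simp only [Complex.norm_real, Real.norm_eq_abs, Complex.norm_natCast]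
            rw [abs_of_nonneg ht]
            ring
    · rw [show (0 : ℝ) = ∑ j ∈ Finset.range k, 0 by simp]
      refine tendsto_finset_sum _ fun j _ => ?_
      rw [show (fun t : ℝ => ‖N ^ j *ᵥ w‖ * ((j.factorial : ℝ))⁻¹ * (t ^ j * Real.exp (μ.re * t)))
          = fun t => (‖N ^ j *ᵥ w‖ * ((j.factorial : ℝ))⁻¹) * (t ^ j * Real.exp (μ.re * t))
        from rfl]
      rw [show (0 : ℝ) = (‖N ^ j *ᵥ w‖ * ((j.factorial : ℝ))⁻¹) * 0 by ring]
      apply Tendsto.const_mul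
      have := tendsto_rpow_mul_exp_neg_mul_atTop_nhds_zero (j : ℝ) (-μ.re) (by linarith)
      simp only [neg_neg] at this
      refine this.congr fun t => ?_
      rw [Real.rpow_natCast]
  · simpa using (tendsto_const_nhds : Tendsto (fun _ : ℝ => (0 : Fin n → ℂ)) atTop _)
  · have := ha.add hb
    simpa [Matrix.mulVec_add] using this

/-- Pointwise decay of `exp(tA)` for a real Hurwitz matrix. -/
lemma LyapAux.tendsto_exp_mulVec_real (A : Matrix (Fin n) (Fin n) ℝ) (hA : IsHurwitz A)
    (v : Fin n → ℝ) :
    Tendsto (fun t : ℝ => exp (t • A) *ᵥ v) atTop (𝓝 0) := by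
  have hcontmap : Continuous fun X : Matrix (Fin n) (Fin n) ℝ => X.map (Complex.ofReal : ℝ → ℂ) :=
    continuous_id.matrix_map Complex.continuous_ofReal
  have hmap : ∀ t : ℝ, ∀ i, (((exp (t • A) *ᵥ v) i : ℝ) : ℂ)
      = (exp ((t : ℂ) • A.map Complex.ofReal) *ᵥ (fun j => ((v j : ℝ) : ℂ))) i := by
    intro t i
    have h0 := RingHom.map_mulVec (Complex.ofRealHom) (exp (t • A)) v i
    show Complex.ofRealHom ((exp (t • A) *ᵥ v) i) = _
    rw [h0]
    have h1 : (exp (t • A)).map (Complex.ofReal : ℝ → ℂ)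
        = exp ((t • A).map (Complex.ofReal : ℝ → ℂ)) := by
      have := map_exp (Complex.ofRealHom.mapMatrix :
        Matrix (Fin n) (Fin n) ℝ →+* Matrix (Fin n) (Fin n) ℂ) (by exact hcontmap) (t • A)
      simp only [RingHom.mapMatrix_apply] at this
      exact this
    have h2 : (t • A).map (Complex.ofReal : ℝ → ℂ) = (t : ℂ) • A.map Complex.ofReal := by
      ext i j
      simp [Complex.real_smul]
    have h3 : exp ((t : ℂ) • A.map Complex.ofReal) = exp ((t : ℂ) • A.map Complex.ofReal) := by
      rfl
    show ((exp (t • A)).map Complex.ofReal *ᵥ _) i = _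
    rw [h1, h2, h3]
    rfl
  have hc := LyapAux.tendsto_exp_mulVec_complex (A.map Complex.ofReal) hA
    (fun j => ((v j : ℝ) : ℂ))
  rw [tendsto_pi_nhds]
  intro i
  have hci : Tendsto (fun t : ℝ =>
      (exp ((t : ℂ) • A.map Complex.ofReal) *ᵥ (fun j => ((v j : ℝ) : ℂ))) i) atTop (𝓝 0) := by
    have := tendsto_pi_nhds.mp hc i
    simpa using this
  have hre : Tendsto (fun t : ℝ => (((exp (t • A) *ᵥ v) i : ℝ) : ℂ)) atTop (𝓝 0) := by
    refine hci.congr fun t => ?_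
    rw [hmap t i]
  have := (Complex.continuous_re.tendsto 0).comp hre
  simpa [Function.comp_def] using this

lemma LyapAux.isHurwitz_transpose {A : Matrix (Fin n) (Fin n) ℝ} (hA : IsHurwitz A) :
    IsHurwitz Aᵀ := by
  intro μ hμ
  apply hA μ
  have htr : (Aᵀ).map (Complex.ofReal : ℝ → ℂ) = (A.map (Complex.ofReal : ℝ → ℂ))ᵀ := rfl
  rw [htr] at hμ
  rw [spectrum.mem_iff] at hμ ⊢
  intro hu
  apply hμ
  have heq : algebraMap ℂ (Matrix (Fin n) (Fin n) ℂ) μ - (A.map Complex.ofReal)ᵀ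
      = (algebraMap ℂ (Matrix (Fin n) (Fin n) ℂ) μ - A.map Complex.ofReal)ᵀ := by
    rw [Matrix.transpose_sub, Algebra.algebraMap_eq_smul_one, Matrix.transpose_smul,
      Matrix.transpose_one]
  rw [heq, Matrix.isUnit_iff_isUnit_det, Matrix.det_transpose,
    ← Matrix.isUnit_iff_isUnit_det]
  exact hu

/-- Derivative of `t ↦ exp(tA) C exp(tB)`. -/
lemma LyapAux.hasDerivAt_exp_conj (A B C : Matrix (Fin n) (Fin n) ℝ) (t : ℝ) :
    HasDerivAt (fun t : ℝ => exp (t • A) * C * exp (t • B))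
      (exp (t • A) * (A * C + C * B) * exp (t • B)) t := by
  have hA := hasDerivAt_exp_smul_const (𝕂 := ℝ) A t
  have hB := hasDerivAt_exp_smul_const (𝕂 := ℝ) B t
  have h1 : HasDerivAt (fun u : ℝ => C * exp (u • B)) (C * (exp (t • B) * B)) t :=
    hB.const_mul C
  have h2 := hA.mul h1
  have hcommB : Commute (exp (t • B)) B := ((Commute.refl B).smul_left t).exp_left
  have hderiv : exp (t • A) * (A * C + C * B) * exp (t • B)
      = exp (t • A) * A * (C * exp (t • B)) + exp (t • A) * (C * (exp (t • B) * B)) := by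
    rw [hcommB.eq]
    noncomm_ring
  rw [hderiv]
  simp only [mul_assoc, Pi.mul_def] at h2 ⊢
  exact Iff.rfl.mp h2

/-- continuity helper: a fixed quadratic-type form applied to two decaying curves. -/
lemma LyapAux.tendsto_dot (S : Matrix (Fin n) (Fin n) ℝ) {u u' : ℝ → Fin n → ℝ}
    (h1 : Tendsto u atTop (𝓝 0)) (h2 : Tendsto u' atTop (𝓝 0)) :
    Tendsto (fun t => u t ⬝ᵥ (S *ᵥ u' t)) atTop (𝓝 0) := by
  have hcont : Continuous fun p : (Fin n → ℝ) × (Fin n → ℝ) => p.1 ⬝ᵥ (S *ᵥ p.2) := by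
    simp only [dotProduct, Matrix.mulVec]
    refine continuous_finset_sum _ fun i _ => ?_
    exact ((continuous_apply i).comp continuous_fst).mul
      (continuous_finset_sum _ fun j _ =>
        continuous_const.mul ((continuous_apply j).comp continuous_snd))
  have := (hcont.tendsto (0, 0)).comp (h1.prodMk_nhds h2)
  simpa [Function.comp_def] using this

lemma LyapAux.dot_conj (E D : Matrix (Fin n) (Fin n) ℝ) (x : Fin n → ℝ) :
    x ⬝ᵥ ((E * D * Eᵀ) *ᵥ x) = (Eᵀ *ᵥ x) ⬝ᵥ (D *ᵥ (Eᵀ *ᵥ x)) := by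
  rw [mul_assoc, ← Matrix.mulVec_mulVec, Matrix.dotProduct_mulVec, ← Matrix.mulVec_transpose,
    ← Matrix.mulVec_mulVec]

/-- Any strict Lyapunov LMI certificate `X` dominates the Gramian `P`. -/
theorem lmi_certificate_dominates_gramian {n : ℕ}
    (A Q X P : Matrix (Fin n) (Fin n) ℝ)
    (hA : IsHurwitz A) (hQ : Q.PosSemidef) (hX : X.IsSymm)
    (hLMI : (A * X + X * Aᵀ + Q).NegDef)
    (hP : A * P + P * Aᵀ + Q = 0) :
    (X - P).PosDef := by
  have hAT : IsHurwitz Aᵀ := LyapAux.isHurwitz_transpose hA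
  have hPQ : A * P + P * Aᵀ = -Q := by
    have := hP
    rw [add_eq_zero_iff_eq_neg] at this
    exact this
  have hQsymm : Qᵀ = Q := by
    have := hQ.1
    simpa [Matrix.IsHermitian, Matrix.conjTranspose_eq_transpose_of_trivial] using this
  -- exp(t • Aᵀ) = (exp (t • A))ᵀ
  have hexpT : ∀ t : ℝ, exp (t • Aᵀ) = (exp (t • A))ᵀ := by
    intro t
    rw [show t • Aᵀ = (t • A)ᵀ from (Matrix.transpose_smul t A).symm]
    exact Matrix.exp_transpose _
  -- P is symmetric
  have hPsymm : Pᵀ = P := by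
    set S : Matrix (Fin n) (Fin n) ℝ := P - Pᵀ with hSdef
    have hPTQ : A * Pᵀ + Pᵀ * Aᵀ = -Q := by
      have h := congrArg Matrix.transpose hPQ
      rw [Matrix.transpose_add, Matrix.transpose_mul, Matrix.transpose_mul,
        Matrix.transpose_transpose, Matrix.transpose_neg, hQsymm] at h
      rw [add_comm] at h
      exact h
    have hSlyap : A * S + S * Aᵀ = 0 := by
      rw [hSdef]
      have : A * (P - Pᵀ) + (P - Pᵀ) * Aᵀ = (A * P + P * Aᵀ) - (A * Pᵀ + Pᵀ * Aᵀ) := by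
        noncomm_ring
      rw [this, hPQ, hPTQ, sub_self]
    have hdiff : ∀ t : ℝ, HasDerivAt (fun t : ℝ => exp (t • A) * S * exp (t • Aᵀ))
        (0 : Matrix (Fin n) (Fin n) ℝ) t := by
      intro t
      have := LyapAux.hasDerivAt_exp_conj A Aᵀ S t
      rwa [hSlyap, mul_zero, zero_mul] at this
    have hconst : ∀ t : ℝ, exp (t • A) * S * exp (t • Aᵀ) = S := by
      intro t
      have h0 := is_const_of_deriv_eq_zero (f := fun t : ℝ => exp (t • A) * S * exp (t • Aᵀ))
        (fun u => (hdiff u).differentiableAt) (fun u => (hdiff u).deriv) t 0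
      simpa [exp_zero] using h0
    have hSzero : S = 0 := by
      ext i j
      have hform : ∀ t : ℝ, (exp (t • A) * S * exp (t • Aᵀ)) i j
          = (exp (t • Aᵀ) *ᵥ Pi.single i 1) ⬝ᵥ (S *ᵥ (exp (t • Aᵀ) *ᵥ Pi.single j 1)) := by
        intro t
        rw [hexpT t]
        have hcol : ∀ l : Fin n, (exp (t • A))ᵀ *ᵥ Pi.single l 1
            = fun a => exp (t • A) l a := by
          intro l
          ext a
          simp [Matrix.mulVec_single, Matrix.transpose_apply]
        rw [hcol i, hcol j]
        simp only [Matrix.mul_apply, dotProduct, Matrix.mulVec, Matrix.transpose_apply]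
        simp only [Finset.sum_mul, Finset.mul_sum]
        rw [Finset.sum_comm]
        refine Finset.sum_congr rfl fun a _ => Finset.sum_congr rfl fun b _ => ?_
        ring
      have hlim : Tendsto (fun t : ℝ => (exp (t • A) * S * exp (t • Aᵀ)) i j) atTop (𝓝 0) := by
        rw [show (fun t : ℝ => (exp (t • A) * S * exp (t • Aᵀ)) i j)
          = fun t : ℝ => (exp (t • Aᵀ) *ᵥ Pi.single i 1) ⬝ᵥ
              (S *ᵥ (exp (t • Aᵀ) *ᵥ Pi.single j 1)) from funext hform]
        exact LyapAux.tendsto_dot S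
          (LyapAux.tendsto_exp_mulVec_real Aᵀ hAT (Pi.single i 1))
          (LyapAux.tendsto_exp_mulVec_real Aᵀ hAT (Pi.single j 1))
      have hconst' : Tendsto (fun _ : ℝ => S i j) atTop (𝓝 (S i j)) := tendsto_const_nhds
      have : S i j = 0 := by
        refine tendsto_nhds_unique ?_ hlim
        refine hconst'.congr fun t => ?_
        rw [hconst t]
      simpa using this
    have := sub_eq_zero.mp hSzero
    exact this.symm
  -- the Lyapunov difference
  set D : Matrix (Fin n) (Fin n) ℝ := X - P with hDdef
  set N : Matrix (Fin n) (Fin n) ℝ := A * X + X * Aᵀ + Q with hNdef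
  have hDlyap : A * D + D * Aᵀ = N := by
    rw [hDdef, hNdef]
    have : A * (X - P) + (X - P) * Aᵀ = (A * X + X * Aᵀ) - (A * P + P * Aᵀ) := by
      noncomm_ring
    rw [this, hPQ, sub_neg_eq_add]
  rw [Matrix.posDef_iff_dotProduct_mulVec]
  constructor
  · -- Hermitian
    have hXP : (X - P)ᵀ = X - P := by
      rw [Matrix.transpose_sub, hX.eq, hPsymm]
    show (X - P)ᴴ = X - P
    ext i j
    rw [Matrix.conjTranspose_apply, star_trivial]
    conv_rhs => rw [← hXP]
    rw [Matrix.transpose_apply]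
  · intro x hx
    -- the quadratic function along the flow
    set h : ℝ → ℝ := fun t => x ⬝ᵥ ((exp (t • A) * D * exp (t • Aᵀ)) *ᵥ x) with hhdef
    -- continuous linear functional
    let L : Matrix (Fin n) (Fin n) ℝ →L[ℝ] ℝ :=
      LinearMap.toContinuousLinearMap
        { toFun := fun M => x ⬝ᵥ (M *ᵥ x)
          map_add' := fun M₁ M₂ => by
            simp [Matrix.add_mulVec, dotProduct_add]
          map_smul' := fun c M => by
            simp [Matrix.smul_mulVec] }
    have hLapp : ∀ M : Matrix (Fin n) (Fin n) ℝ, L M = x ⬝ᵥ (M *ᵥ x) := fun _ => rfl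
    have hyne : ∀ t : ℝ, exp (t • Aᵀ) *ᵥ x ≠ 0 := by
      intro t hy0
      apply hx
      have hinv : exp (-(t • Aᵀ)) * exp (t • Aᵀ) = 1 := by
        rw [← Matrix.exp_add_of_commute _ _ ((Commute.refl (t • Aᵀ)).neg_left), neg_add_cancel]
        exact NormedSpace.exp_zero
      calc x = (exp (-(t • Aᵀ)) * exp (t • Aᵀ)) *ᵥ x := by rw [hinv, Matrix.one_mulVec]
        _ = exp (-(t • Aᵀ)) *ᵥ (exp (t • Aᵀ) *ᵥ x) := by rw [Matrix.mulVec_mulVec]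
        _ = 0 := by rw [hy0, Matrix.mulVec_zero]
    have hderiv : ∀ t : ℝ, HasDerivAt h
        ((exp (t • Aᵀ) *ᵥ x) ⬝ᵥ (N *ᵥ (exp (t • Aᵀ) *ᵥ x))) t := by
      intro t
      have hF := LyapAux.hasDerivAt_exp_conj A Aᵀ D t
      rw [hDlyap] at hF
      have := L.hasFDerivAt.comp_hasDerivAt t hF
      have heq : L (exp (t • A) * N * exp (t • Aᵀ))
          = (exp (t • Aᵀ) *ᵥ x) ⬝ᵥ (N *ᵥ (exp (t • Aᵀ) *ᵥ x)) := by
        rw [hLapp, hexpT t, LyapAux.dot_conj]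
      rw [← heq]
      exact this
    have hderiv_neg : ∀ t : ℝ, deriv h t < 0 := by
      intro t
      rw [(hderiv t).deriv]
      exact hLMI.2 _ (hyne t)
    have hanti : StrictAnti h := strictAnti_of_deriv_neg hderiv_neg
    have hlim : Tendsto h atTop (𝓝 0) := by
      have hform : ∀ t : ℝ, h t
          = (exp (t • Aᵀ) *ᵥ x) ⬝ᵥ (D *ᵥ (exp (t • Aᵀ) *ᵥ x)) := by
        intro t
        rw [hhdef]
        dsimp only
        rw [hexpT t, LyapAux.dot_conj]
      rw [show h = fun t : ℝ => (exp (t • Aᵀ) *ᵥ x) ⬝ᵥ (D *ᵥ (exp (t • Aᵀ) *ᵥ x))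
        from funext hform]
      exact LyapAux.tendsto_dot D
        (LyapAux.tendsto_exp_mulVec_real Aᵀ hAT x)
        (LyapAux.tendsto_exp_mulVec_real Aᵀ hAT x)
    have h1_nonneg : 0 ≤ h 1 := by
      refine le_of_tendsto hlim ?_
      filter_upwards [eventually_ge_atTop (1 : ℝ)] with t ht
      exact hanti.antitone ht
    have h0_eq : h 0 = x ⬝ᵥ (D *ᵥ x) := by
      rw [hhdef]
      dsimp only
      rw [zero_smul, zero_smul, NormedSpace.exp_zero, one_mul, mul_one]
    have h01 : h 1 < h 0 := hanti (by norm_num)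
    have : 0 < x ⬝ᵥ (D *ᵥ x) := by
      rw [← h0_eq]
      exact lt_of_le_of_lt h1_nonneg h01
    simpa [star_trivial] using this

end LyapAux
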